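/- For every κ with 1 < κ ≤ 2 and every real number x, |1 + x|^κ ≤ 1 + κ·x + 2^{2−κ}·|x|^κ. -/
import Mathlib

open Real Set NNReal

/-- Subadditivity of `t ^ p` for `0 ≤ p ≤ 1`. -/
private lemma lemA {p : ℝ} (hp0 : 0 ≤ p) (hp1 : p ≤ 1) {a b : ℝ} (ha : 0 ≤ a) (hb : 0 ≤ b) :
    (a + b) ^ p ≤ a ^ p + b ^ p := by
  lift a to ℝ≥0 using ha
  lift b to ℝ≥0 using hb
  rw [← NNReal.coe_add, ← NNReal.coe_rpow, ← NNReal.coe_rpow, ← NNReal.coe_rpow,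
    ← NNReal.coe_add, NNReal.coe_le_coe]
  exact NNReal.rpow_add_le_add_rpow a b hp0 hp1

/-- Reverse power-mean inequality for `0 < p ≤ 1`. -/
private lemma lemB {p : ℝ} (hp0 : 0 < p) (hp1 : p ≤ 1) {a b : ℝ} (ha : 0 ≤ a) (hb : 0 ≤ b) :
    a ^ p + b ^ p ≤ 2 ^ (1 - p) * (a + b) ^ p := by
  lift a to ℝ≥0 using ha
  lift b to ℝ≥0 using hb
  rw [← NNReal.coe_add, ← NNReal.coe_rpow, ← NNReal.coe_rpow, ← NNReal.coe_rpow,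
    ← NNReal.coe_add]
  rw [show ((2 : ℝ) ^ ((1 : ℝ) - p)) = (((2 : ℝ≥0) ^ ((1:ℝ) - p) : ℝ≥0) : ℝ) by
    rw [NNReal.coe_rpow, NNReal.coe_ofNat]]
  rw [← NNReal.coe_mul, NNReal.coe_le_coe]
  have h := NNReal.rpow_add_le_mul_rpow_add_rpow (a ^ p) (b ^ p) (p := 1 / p)
    (by rw [le_div_iff₀ hp0]; linarith)
  have h2 : ((a ^ p) ^ (1/p) : ℝ≥0) = a := by
    rw [← NNReal.rpow_mul, mul_one_div, div_self hp0.ne', NNReal.rpow_one]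
  have h3 : ((b ^ p) ^ (1/p) : ℝ≥0) = b := by
    rw [← NNReal.rpow_mul, mul_one_div, div_self hp0.ne', NNReal.rpow_one]
  rw [h2, h3] at h
  have h4 := NNReal.rpow_le_rpow h hp0.le
  rwa [← NNReal.rpow_mul, one_div_mul_cancel hp0.ne', NNReal.rpow_one, NNReal.mul_rpow,
    ← NNReal.rpow_mul, show (1/p - 1) * p = p * (1/p) - p by ring, mul_one_div,
    div_self hp0.ne'] at h4

private lemma case_pos (κ : ℝ) (hκ1 : 1 < κ) (hκ2 : κ ≤ 2) {x : ℝ} (hx : 0 ≤ x) :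
    (1 + x) ^ κ ≤ 1 + κ * x + x ^ κ := by
  set g : ℝ → ℝ := fun y => 1 + κ * y + y ^ κ - (1 + y) ^ κ with hgdef
  have hg : ∀ y : ℝ, HasDerivAt g (κ + κ * y ^ (κ - 1) - 1 * κ * (1 + y) ^ (κ - 1)) y := by
    intro y
    have h1 : HasDerivAt (fun y : ℝ => 1 + κ * y) κ y := by
      simpa using ((hasDerivAt_id y).const_mul κ).const_add 1
    have h2 : HasDerivAt (fun y : ℝ => y ^ κ) (κ * y ^ (κ - 1)) y :=
      Real.hasDerivAt_rpow_const (Or.inr hκ1.le)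
    have h3 : HasDerivAt (fun y : ℝ => (1 + y) ^ κ) (1 * κ * (1 + y) ^ (κ - 1)) y :=
      ((hasDerivAt_id y).const_add 1).rpow_const (Or.inr hκ1.le)
    exact (h1.add h2).sub h3
  have hmono : MonotoneOn g (Ici (0 : ℝ)) := by
    apply monotoneOn_of_deriv_nonneg (convex_Ici 0)
      (fun y _ => (hg y).continuousAt.continuousWithinAt)
      (fun y _ => ((hg y).differentiableAt).differentiableWithinAt)
    intro y hy
    rw [interior_Ici] at hy
    rw [(hg y).deriv]
    have hsub : (1 + y) ^ (κ - 1) ≤ 1 ^ (κ - 1) + y ^ (κ - 1) :=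
      lemA (by linarith) (by linarith) zero_le_one (le_of_lt hy)
    rw [Real.one_rpow] at hsub
    nlinarith [Real.rpow_nonneg (le_of_lt hy) (κ - 1)]
  have h0 : g 0 = 0 := by
    simp [hgdef, Real.zero_rpow (by positivity : κ ≠ 0), Real.one_rpow]
  have := hmono (self_mem_Ici) (mem_Ici.mpr hx) hx
  rw [h0] at this
  simp only [hgdef] at this
  linarith

private lemma case_mid (κ : ℝ) (hκ1 : 1 < κ) (hκ2 : κ ≤ 2) {s : ℝ} (hs0 : 0 ≤ s) (hs1 : s ≤ 1) :
    (1 - s) ^ κ ≤ 1 - κ * s + 2 ^ ((2:ℝ) - κ) * s ^ κ := by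
  have hc : (1 : ℝ) ≤ 2 ^ ((2:ℝ) - κ) := Real.one_le_rpow one_le_two (by linarith)
  set c : ℝ := 2 ^ ((2:ℝ) - κ) with hcdef
  set g : ℝ → ℝ := fun y => 1 - κ * y + c * y ^ κ - (1 - y) ^ κ with hgdef
  have hg : ∀ y : ℝ,
      HasDerivAt g (-κ + c * (κ * y ^ (κ - 1)) - (-1) * κ * (1 - y) ^ (κ - 1)) y := by
    intro y
    have h1 : HasDerivAt (fun y : ℝ => 1 - κ * y) (-κ) y := by
      simpa using ((hasDerivAt_id y).const_mul κ).const_sub 1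
    have h2 : HasDerivAt (fun y : ℝ => c * y ^ κ) (c * (κ * y ^ (κ - 1))) y :=
      (Real.hasDerivAt_rpow_const (Or.inr hκ1.le)).const_mul c
    have h3 : HasDerivAt (fun y : ℝ => (1 - y) ^ κ) ((-1) * κ * (1 - y) ^ (κ - 1)) y := by
      have := ((hasDerivAt_id y).const_sub 1).rpow_const (p := κ) (Or.inr hκ1.le)
      simpa using this
    exact (h1.add h2).sub h3
  have hmono : MonotoneOn g (Icc (0 : ℝ) 1) := by
    apply monotoneOn_of_deriv_nonneg (convex_Icc 0 1)
      (fun y _ => (hg y).continuousAt.continuousWithinAt)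
      (fun y _ => ((hg y).differentiableAt).differentiableWithinAt)
    intro y hy
    rw [interior_Icc] at hy
    obtain ⟨hy0, hy1⟩ := hy
    rw [(hg y).deriv]
    have e1 : y ≤ y ^ (κ - 1) := by
      have := Real.rpow_le_rpow_of_exponent_ge hy0 hy1.le (by linarith : κ - 1 ≤ 1)
      rwa [Real.rpow_one] at this
    have e2 : 1 - y ≤ (1 - y) ^ (κ - 1) := by
      have := Real.rpow_le_rpow_of_exponent_ge (by linarith : (0:ℝ) < 1 - y)
        (by linarith : 1 - y ≤ 1) (by linarith : κ - 1 ≤ 1)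
      rwa [Real.rpow_one] at this
    have e3 : y ^ (κ - 1) ≤ c * y ^ (κ - 1) := by
      nlinarith [Real.rpow_nonneg hy0.le (κ - 1)]
    nlinarith
  have h0 : g 0 = 0 := by
    simp [hgdef, Real.zero_rpow (by positivity : κ ≠ 0), Real.one_rpow]
  have := hmono (left_mem_Icc.mpr zero_le_one) (mem_Icc.mpr ⟨hs0, hs1⟩) hs0
  rw [h0] at this
  simp only [hgdef] at this
  linarith

private lemma case_neg (κ : ℝ) (hκ1 : 1 < κ) (hκ2 : κ ≤ 2) {y : ℝ} (hy : 1 ≤ y) :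
    (y - 1) ^ κ ≤ 1 - κ * y + 2 ^ ((2:ℝ) - κ) * y ^ κ := by
  have hc : (1 : ℝ) ≤ 2 ^ ((2:ℝ) - κ) := Real.one_le_rpow one_le_two (by linarith)
  set c : ℝ := 2 ^ ((2:ℝ) - κ) with hcdef
  set g : ℝ → ℝ := fun y => 1 - κ * y + c * y ^ κ - (y - 1) ^ κ with hgdef
  have hg : ∀ y : ℝ,
      HasDerivAt g (-κ + c * (κ * y ^ (κ - 1)) - 1 * κ * (y - 1) ^ (κ - 1)) y := by
    intro y
    have h1 : HasDerivAt (fun y : ℝ => 1 - κ * y) (-κ) y := by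
      simpa using ((hasDerivAt_id y).const_mul κ).const_sub 1
    have h2 : HasDerivAt (fun y : ℝ => c * y ^ κ) (c * (κ * y ^ (κ - 1))) y :=
      (Real.hasDerivAt_rpow_const (Or.inr hκ1.le)).const_mul c
    have h3 : HasDerivAt (fun y : ℝ => (y - 1) ^ κ) (1 * κ * (y - 1) ^ (κ - 1)) y :=
      ((hasDerivAt_id y).sub_const 1).rpow_const (Or.inr hκ1.le)
    exact (h1.add h2).sub h3
  have hmono : MonotoneOn g (Ici (1 : ℝ)) := by
    apply monotoneOn_of_deriv_nonneg (convex_Ici 1)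
      (fun y _ => (hg y).continuousAt.continuousWithinAt)
      (fun y _ => ((hg y).differentiableAt).differentiableWithinAt)
    intro y hy'
    rw [interior_Ici, mem_Ioi] at hy'
    rw [(hg y).deriv]
    have hB : 1 ^ (κ - 1) + (y - 1) ^ (κ - 1) ≤ 2 ^ ((1:ℝ) - (κ - 1)) * (1 + (y - 1)) ^ (κ - 1) :=
      lemB (by linarith) (by linarith) zero_le_one (by linarith)
    rw [Real.one_rpow, show (1:ℝ) + (y - 1) = y by ring,
      show (1:ℝ) - (κ - 1) = 2 - κ by ring] at hB
    rw [hcdef]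
    nlinarith
  have h0 : (0 : ℝ) ≤ g 1 := by
    simp only [hgdef]
    rw [Real.one_rpow, sub_self, Real.zero_rpow (by positivity : κ ≠ 0)]
    linarith
  have := hmono (self_mem_Ici) (mem_Ici.mpr hy) hy
  simp only [hgdef] at this h0
  linarith

/-- For every `κ` with `1 < κ ≤ 2` and every real `x`,
`|1 + x|^κ ≤ 1 + κ x + 2^{2−κ} |x|^κ`. -/
theorem stmt_19 (κ x : ℝ) (hκ1 : 1 < κ) (hκ2 : κ ≤ 2) :
    |1 + x| ^ κ ≤ 1 + κ * x + (2 : ℝ) ^ ((2 : ℝ) - κ) * |x| ^ κ := by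
  have hc : (1 : ℝ) ≤ 2 ^ ((2:ℝ) - κ) := Real.one_le_rpow one_le_two (by linarith)
  rcases le_or_gt 0 x with hx | hx
  · rw [abs_of_nonneg (by linarith), abs_of_nonneg hx]
    have h := case_pos κ hκ1 hκ2 hx
    have hxκ : (0:ℝ) ≤ x ^ κ := Real.rpow_nonneg hx κ
    nlinarith
  · rcases le_or_gt (-1) x with hx1 | hx1
    · rw [abs_of_nonneg (by linarith), abs_of_neg hx]
      have h := case_mid κ hκ1 hκ2 (s := -x) (by linarith) (by linarith)
      rw [show (1 : ℝ) - -x = 1 + x by ring] at h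
      linarith
    · rw [abs_of_neg (by linarith : 1 + x < 0), abs_of_neg hx]
      have h := case_neg κ hκ1 hκ2 (y := -x) (by linarith)
      rw [show (-x : ℝ) - 1 = -(1 + x) by ring] at h
      linarith
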